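/- arXiv:2312.07998 — 3 statements merged into one kernel-verified Lean document; each statement's English description precedes it below -/
import Mathlib

section
/- Under assumptions (A1), (A3) and (A4), with C = 1 − L_{x,y}/min(σ_x, σ_y), for every (x, y) ∈ 𝒳 × 𝒴 it holds that (C²/2)·(‖x − x*‖_x + ‖y − y*‖_y)² ≤ ‖x − x*(y)‖_x² + ‖y − y*(x)‖_y². -/
open MeasureTheory Real Set

noncomputable section

/-- We identify `ℝ^d` with the Euclidean space on `Fin d`. -/
abbrev Ed (d : ℕ) := EuclideanSpace ℝ (Fin d)

/-- `N` is a norm on `ℝ^d` (possibly different from the Euclidean one). -/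
structure IsNormFn {d : ℕ} (N : Ed d → ℝ) : Prop where
  nonneg : ∀ v, 0 ≤ N v
  triangle : ∀ v w, N (v + w) ≤ N v + N w
  smul_eq : ∀ (c : ℝ) (v : Ed d), N (c • v) = |c| * N v
  eq_zero : ∀ v, N v = 0 → v = 0

/-- The dual norm of `N`, via the Euclidean inner ℝ product pairing. -/
def dualN {d : ℕ} (N : Ed d → ℝ) (v : Ed d) : ℝ :=
  sSup {r | ∃ u : Ed d, N u ≤ 1 ∧ r = |(inner ℝ u v : ℝ)|}

/-- `f` is `σ`-strongly convex on `s` w.r.t. the norm `N`. -/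
def SCvxOn {d : ℕ} (N : Ed d → ℝ) (σ : ℝ) (s : Set (Ed d)) (f : Ed d → ℝ) : Prop :=
  ∀ x ∈ s, ∀ x' ∈ s, ∀ α : ℝ, 0 ≤ α → α ≤ 1 →
    f (α • x + (1 - α) • x') ≤
      α * f x + (1 - α) * f x' - σ * α * (1 - α) / 2 * N (x - x') ^ 2

/-- `f` is `σ`-strongly concave on `s` w.r.t. the norm `N`. -/
def SCcvOn {d : ℕ} (N : Ed d → ℝ) (σ : ℝ) (s : Set (Ed d)) (f : Ed d → ℝ) : Prop :=
  ∀ y ∈ s, ∀ y' ∈ s, ∀ α : ℝ, 0 ≤ α → α ≤ 1 →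
    α * f y + (1 - α) * f y' + σ * α * (1 - α) / 2 * N (y - y') ^ 2 ≤
      f (α • y + (1 - α) • y')

/-- `f` is `L`-Lipschitz on `s` w.r.t. the norm `N`. -/
def LipOn {d : ℕ} (N : Ed d → ℝ) (L : ℝ) (s : Set (Ed d)) (f : Ed d → ℝ) : Prop :=
  ∀ x ∈ s, ∀ x' ∈ s, |f x - f x'| ≤ L * N (x - x')

/-- `(x0, y0)` is a saddle point of `H` on `𝒳 × 𝒴`. -/
def IsSaddleOn {d : ℕ} (𝒳 𝒴 : Set (Ed d)) (H : Ed d → Ed d → ℝ) (x0 y0 : Ed d) : Prop :=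
  x0 ∈ 𝒳 ∧ y0 ∈ 𝒴 ∧ ∀ x ∈ 𝒳, ∀ y ∈ 𝒴, H x0 y ≤ H x0 y0 ∧ H x0 y0 ≤ H x y0

/-- `x0` minimizes `f` over `𝒳`. -/
def IsArgminOn' {d : ℕ} (𝒳 : Set (Ed d)) (f : Ed d → ℝ) (x0 : Ed d) : Prop :=
  x0 ∈ 𝒳 ∧ ∀ x ∈ 𝒳, f x0 ≤ f x

/-- `y0` maximizes `f` over `𝒴`. -/
def IsArgmaxOn' {d : ℕ} (𝒴 : Set (Ed d)) (f : Ed d → ℝ) (y0 : Ed d) : Prop :=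
  y0 ∈ 𝒴 ∧ ∀ y ∈ 𝒴, f y ≤ f y0

namespace IsNormFn

variable {d : ℕ} {N : Ed d → ℝ}

lemma map_zero (h : IsNormFn N) : N 0 = 0 := by
  simpa using h.smul_eq 0 0

lemma map_neg (h : IsNormFn N) (v : Ed d) : N (-v) = N v := by
  simpa using h.smul_eq (-1) v

lemma sub_symm (h : IsNormFn N) (v w : Ed d) : N (v - w) = N (w - v) := by
  rw [← h.map_neg (v - w), neg_sub]

lemma sum_le (h : IsNormFn N) {ι : Type*} (s : Finset ι) (f : ι → Ed d) :
    N (∑ i ∈ s, f i) ≤ ∑ i ∈ s, N (f i) := by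
  classical
  induction s using Finset.cons_induction with
  | empty => simp [h.map_zero]
  | cons a s ha ih =>
      rw [Finset.sum_cons, Finset.sum_cons]
      exact (h.triangle _ _).trans (by linarith)

lemma exists_bound (h : IsNormFn N) : ∃ K : ℝ, 0 ≤ K ∧ ∀ v, N v ≤ K * ‖v‖ := by
  classical
  refine ⟨∑ i : Fin d, N (EuclideanSpace.single i 1), Finset.sum_nonneg fun i _ => h.nonneg _,
    fun v => ?_⟩
  have hv : v = ∑ i : Fin d, v i • EuclideanSpace.single i (1:ℝ) := by
    conv_lhs => rw [← (EuclideanSpace.basisFun (Fin d) ℝ).sum_repr v]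
    simp [EuclideanSpace.basisFun_repr, EuclideanSpace.basisFun_apply]
  calc N v ≤ ∑ i : Fin d, N (v i • EuclideanSpace.single i (1:ℝ)) := by
        conv_lhs => rw [hv]
        exact h.sum_le _ _
    _ = ∑ i : Fin d, |v i| * N (EuclideanSpace.single i (1:ℝ)) := by
        simp [h.smul_eq]
    _ ≤ ∑ i : Fin d, ‖v‖ * N (EuclideanSpace.single i (1:ℝ)) := by
        refine Finset.sum_le_sum fun i _ => ?_
        refine mul_le_mul_of_nonneg_right ?_ (h.nonneg _)
        have h1 : v i = (inner ℝ (EuclideanSpace.single i (1:ℝ)) v : ℝ) := by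
          simp [EuclideanSpace.inner_single_left]
        rw [h1]
        calc |(inner ℝ (EuclideanSpace.single i (1:ℝ)) v : ℝ)|
            ≤ ‖EuclideanSpace.single i (1:ℝ)‖ * ‖v‖ := abs_real_inner_le_norm _ _
          _ = ‖v‖ := by rw [EuclideanSpace.norm_single]; simp
    _ = (∑ i : Fin d, N (EuclideanSpace.single i (1:ℝ))) * ‖v‖ := by
        rw [Finset.sum_mul]; simp [mul_comm]

lemma abs_sub_le (h : IsNormFn N) (v w : Ed d) : |N v - N w| ≤ N (v - w) := by
  rw [abs_sub_le_iff]
  constructor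
  · have := h.triangle (v - w) w; simpa using this
  · have := h.triangle (w - v) v
    rw [h.sub_symm w v] at this
    simpa using this

lemma continuous (h : IsNormFn N) : Continuous N := by
  obtain ⟨K, hK0, hK⟩ := h.exists_bound
  refine (LipschitzWith.of_dist_le_mul (K := K.toNNReal) fun a b => ?_).continuous
  rw [Real.dist_eq, Real.coe_toNNReal K hK0, dist_eq_norm]
  exact (h.abs_sub_le a b).trans (hK _)

lemma exists_pos (h : IsNormFn N) : ∃ c : ℝ, 0 < c ∧ ∀ v, c * ‖v‖ ≤ N v := by
  by_cases hsp : (Metric.sphere (0 : Ed d) 1).Nonempty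
  · obtain ⟨u0, hu0, hmin⟩ := (isCompact_sphere (0 : Ed d) 1).exists_isMinOn hsp
      h.continuous.continuousOn
    have hu0n : ‖u0‖ = 1 := by simpa using mem_sphere_zero_iff_norm.mp hu0
    have hc : 0 < N u0 := by
      rcases (h.nonneg u0).lt_or_eq with hlt | heq
      · exact hlt
      · exfalso
        have : u0 = 0 := h.eq_zero u0 heq.symm
        rw [this] at hu0n; simp at hu0n
    refine ⟨N u0, hc, fun v => ?_⟩
    by_cases hv : v = 0
    · simp [hv, h.map_zero]
    · have hvn : (0:ℝ) < ‖v‖ := norm_pos_iff.mpr hv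
      have hmem : ‖v‖⁻¹ • v ∈ Metric.sphere (0 : Ed d) 1 := by
        simp [norm_smul, abs_of_pos (inv_pos.mpr hvn), inv_mul_cancel₀ hvn.ne']
      have h3 : N u0 ≤ N (‖v‖⁻¹ • v) := hmin hmem
      have h2 : N (‖v‖⁻¹ • v) = ‖v‖⁻¹ * N v := by
        rw [h.smul_eq, abs_of_pos (inv_pos.mpr hvn)]
      rw [h2] at h3
      calc N u0 * ‖v‖ ≤ (‖v‖⁻¹ * N v) * ‖v‖ := by
            exact mul_le_mul_of_nonneg_right h3 hvn.le
        _ = N v := by field_simp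
  · refine ⟨1, one_pos, fun v => ?_⟩
    have hv : v = 0 := by
      by_contra hv
      exact hsp ⟨‖v‖⁻¹ • v, by
        have hvn : (0:ℝ) < ‖v‖ := norm_pos_iff.mpr hv
        simp [norm_smul, abs_of_pos (inv_pos.mpr hvn), inv_mul_cancel₀ hvn.ne']⟩
    simp [hv, h.map_zero]

lemma dualN_bddAbove (h : IsNormFn N) (v : Ed d) :
    BddAbove {r | ∃ u : Ed d, N u ≤ 1 ∧ r = |(inner ℝ u v : ℝ)|} := by
  obtain ⟨c, hc, hcle⟩ := h.exists_pos
  refine ⟨c⁻¹ * ‖v‖, fun r hr => ?_⟩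
  obtain ⟨u, hu, rfl⟩ := hr
  have h1 : ‖u‖ ≤ c⁻¹ := by
    have h2 : c * ‖u‖ ≤ 1 := (hcle u).trans hu
    rw [inv_eq_one_div, le_div_iff₀ hc]
    linarith [h2, mul_comm c ‖u‖]
  calc |(inner ℝ u v : ℝ)| ≤ ‖u‖ * ‖v‖ := abs_real_inner_le_norm _ _
    _ ≤ c⁻¹ * ‖v‖ := mul_le_mul_of_nonneg_right h1 (norm_nonneg _)

lemma dualN_nonneg (h : IsNormFn N) (v : Ed d) : 0 ≤ dualN N v :=
  le_csSup (h.dualN_bddAbove v) ⟨0, by simp [h.map_zero], by simp⟩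

lemma abs_inner_le_dualN (h : IsNormFn N) (u v : Ed d) :
    |(inner ℝ u v : ℝ)| ≤ dualN N v * N u := by
  by_cases hu : u = 0
  · simp [hu, h.map_zero]
  · have hN : 0 < N u := by
      rcases (h.nonneg u).lt_or_eq with hlt | heq
      · exact hlt
      · exact absurd (h.eq_zero u heq.symm) hu
    have hmem : |(inner ℝ ((N u)⁻¹ • u) v : ℝ)| ∈
        {r | ∃ w : Ed d, N w ≤ 1 ∧ r = |(inner ℝ w v : ℝ)|} := by
      refine ⟨(N u)⁻¹ • u, ?_, rfl⟩
      rw [h.smul_eq, abs_of_pos (inv_pos.mpr hN), inv_mul_cancel₀ hN.ne']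
    have hle := le_csSup (h.dualN_bddAbove v) hmem
    have heq : |(inner ℝ ((N u)⁻¹ • u) v : ℝ)| = (N u)⁻¹ * |(inner ℝ u v : ℝ)| := by
      rw [real_inner_smul_left, abs_mul, abs_of_pos (inv_pos.mpr hN)]
    rw [heq] at hle
    calc |(inner ℝ u v : ℝ)| = N u * ((N u)⁻¹ * |(inner ℝ u v : ℝ)|) := by field_simp
      _ ≤ N u * dualN N v := mul_le_mul_of_nonneg_left hle hN.le
      _ = dualN N v * N u := mul_comm _ _

end IsNormFn

lemma growth_min {d : ℕ} {N : Ed d → ℝ} {σ : ℝ} {s : Set (Ed d)} {f : Ed d → ℝ} {x0 : Ed d}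
    (hf : SCvxOn N σ s f) (hs : Convex ℝ s) (h0 : IsArgminOn' s f x0) :
    ∀ x ∈ s, f x0 + σ / 2 * N (x - x0) ^ 2 ≤ f x := by
  intro x hx
  have key : ∀ α : ℝ, 0 < α → α < 1 →
      σ * (1 - α) / 2 * N (x - x0) ^ 2 ≤ f x - f x0 := by
    intro α hα0 hα1
    have hmem : α • x + (1 - α) • x0 ∈ s := hs hx h0.1 hα0.le (by linarith) (by ring)
    have h1 := hf x hx x0 h0.1 α hα0.le hα1.le
    have h2 := h0.2 _ hmem
    nlinarith [h1, h2, sq_nonneg (N (x - x0))]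
  have ht : Filter.Tendsto (fun α : ℝ => σ * (1 - α) / 2 * N (x - x0) ^ 2)
      (nhdsWithin 0 (Set.Ioi 0)) (nhds (σ * (1 - 0) / 2 * N (x - x0) ^ 2)) := by
    have hc : Continuous (fun α : ℝ => σ * (1 - α) / 2 * N (x - x0) ^ 2) := by continuity
    exact (hc.tendsto 0).mono_left nhdsWithin_le_nhds
  have hev : ∀ᶠ α in nhdsWithin (0:ℝ) (Set.Ioi 0),
      σ * (1 - α) / 2 * N (x - x0) ^ 2 ≤ f x - f x0 :=
    Filter.eventually_of_mem (Ioo_mem_nhdsGT_of_mem (by norm_num : (0:ℝ) ∈ Set.Ico 0 1))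
      fun α hα => key α hα.1 hα.2
  have hfin := le_of_tendsto ht hev
  have : σ * (1 - 0) / 2 * N (x - x0) ^ 2 = σ / 2 * N (x - x0) ^ 2 := by ring
  linarith [hfin]

lemma growth_max {d : ℕ} {N : Ed d → ℝ} {σ : ℝ} {s : Set (Ed d)} {f : Ed d → ℝ} {y0 : Ed d}
    (hf : SCcvOn N σ s f) (hs : Convex ℝ s) (h0 : IsArgmaxOn' s f y0) :
    ∀ y ∈ s, f y + σ / 2 * N (y - y0) ^ 2 ≤ f y0 := by
  intro y hy
  have key : ∀ α : ℝ, 0 < α → α < 1 →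
      σ * (1 - α) / 2 * N (y - y0) ^ 2 ≤ f y0 - f y := by
    intro α hα0 hα1
    have hmem : α • y + (1 - α) • y0 ∈ s := hs hy h0.1 hα0.le (by linarith) (by ring)
    have h1 := hf y hy y0 h0.1 α hα0.le hα1.le
    have h2 := h0.2 _ hmem
    nlinarith [h1, h2, sq_nonneg (N (y - y0))]
  have ht : Filter.Tendsto (fun α : ℝ => σ * (1 - α) / 2 * N (y - y0) ^ 2)
      (nhdsWithin 0 (Set.Ioi 0)) (nhds (σ * (1 - 0) / 2 * N (y - y0) ^ 2)) := by
    have hc : Continuous (fun α : ℝ => σ * (1 - α) / 2 * N (y - y0) ^ 2) := by continuity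
    exact (hc.tendsto 0).mono_left nhdsWithin_le_nhds
  have hev : ∀ᶠ α in nhdsWithin (0:ℝ) (Set.Ioi 0),
      σ * (1 - α) / 2 * N (y - y0) ^ 2 ≤ f y0 - f y :=
    Filter.eventually_of_mem (Ioo_mem_nhdsGT_of_mem (by norm_num : (0:ℝ) ∈ Set.Ico 0 1))
      fun α hα => key α hα.1 hα.2
  have hfin := le_of_tendsto ht hev
  have : σ * (1 - 0) / 2 * N (y - y0) ^ 2 = σ / 2 * N (y - y0) ^ 2 := by ring
  linarith [hfin]

lemma cross_bound {d : ℕ} (F : Ed d → Ed d → ℝ) (𝒳 𝒴 : Set (Ed d)) (hXcvx : Convex ℝ 𝒳)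
    (nx ny : Ed d → ℝ) (hnx : IsNormFn nx) (Lxy : ℝ)
    (hdiffx : ∀ y, Differentiable ℝ fun x => F x y)
    (hA3x : ∀ x ∈ 𝒳, ∀ y ∈ 𝒴, ∀ y' ∈ 𝒴,
      dualN nx (gradient (fun x' => F x' y) x - gradient (fun x' => F x' y') x)
        ≤ Lxy * ny (y - y')) :
    ∀ x ∈ 𝒳, ∀ x'' ∈ 𝒳, ∀ y ∈ 𝒴, ∀ y' ∈ 𝒴,
      |(F x y - F x y') - (F x'' y - F x'' y')| ≤ Lxy * ny (y - y') * nx (x - x'') := by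
  intro x hx x'' hx'' y hy y' hy'
  set v := x - x'' with hv
  set γ : ℝ → Ed d := fun t => x'' + t • v with hγ
  have hγmem : ∀ t ∈ Set.Icc (0:ℝ) 1, γ t ∈ 𝒳 := by
    intro t ht
    have heq : γ t = t • x + (1 - t) • x'' := by
      simp only [hγ, hv]; module
    rw [heq]
    exact hXcvx hx hx'' ht.1 (by linarith [ht.2]) (by ring)
  set φ : ℝ → ℝ := fun t => F (γ t) y - F (γ t) y' with hφ
  set D : ℝ → ℝ := fun t =>
    (inner ℝ (gradient (fun x' => F x' y) (γ t) - gradient (fun x' => F x' y') (γ t)) v : ℝ)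
    with hD
  have hd : ∀ t ∈ Set.Icc (0:ℝ) 1, HasDerivWithinAt φ (D t) (Set.Icc 0 1) t := by
    intro t ht
    have hγd : HasDerivAt γ v t := by
      simpa [hγ] using ((hasDerivAt_id t).smul_const v).const_add x''
    have h1 : HasDerivAt (fun s => F (γ s) y)
        ((inner ℝ (gradient (fun x' => F x' y) (γ t)) v : ℝ)) t := by
      have hg := ((hdiffx y) (γ t)).hasGradientAt
      have := hg.hasFDerivAt.comp_hasDerivAt t hγd
      simpa [InnerProductSpace.toDual_apply_apply, Function.comp_def] using this
    have h2 : HasDerivAt (fun s => F (γ s) y')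
        ((inner ℝ (gradient (fun x' => F x' y') (γ t)) v : ℝ)) t := by
      have hg := ((hdiffx y') (γ t)).hasGradientAt
      have := hg.hasFDerivAt.comp_hasDerivAt t hγd
      simpa [InnerProductSpace.toDual_apply_apply, Function.comp_def] using this
    have h3 := (h1.sub h2).hasDerivWithinAt (s := Set.Icc (0:ℝ) 1)
    have heq : D t = (inner ℝ (gradient (fun x' => F x' y) (γ t)) v : ℝ) -
        (inner ℝ (gradient (fun x' => F x' y') (γ t)) v : ℝ) := by
      simp [hD, inner_sub_left]
    rw [heq]
    exact h3
  have hbound : ∀ t ∈ Set.Icc (0:ℝ) 1, ‖D t‖ ≤ Lxy * ny (y - y') * nx v := by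
    intro t ht
    set g := gradient (fun x' => F x' y) (γ t) - gradient (fun x' => F x' y') (γ t) with hg
    have h1 : ‖D t‖ = |(inner ℝ v g : ℝ)| := by
      rw [Real.norm_eq_abs, real_inner_comm]
    rw [h1]
    calc |(inner ℝ v g : ℝ)| ≤ dualN nx g * nx v := hnx.abs_inner_le_dualN v g
      _ ≤ Lxy * ny (y - y') * nx v :=
        mul_le_mul_of_nonneg_right (hA3x (γ t) (hγmem t ht) y hy y' hy') (hnx.nonneg v)
  have hmvt := (convex_Icc (0:ℝ) 1).norm_image_sub_le_of_norm_hasDerivWithin_le hd hbound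
    (Set.left_mem_Icc.mpr zero_le_one) (Set.right_mem_Icc.mpr zero_le_one)
  have hφ1 : γ 1 = x := by simp [hγ, hv]
  have hφ0 : γ 0 = x'' := by simp [hγ]
  have : ‖φ 1 - φ 0‖ ≤ Lxy * ny (y - y') * nx v * ‖(1:ℝ) - 0‖ := hmvt
  simp only [hφ, hφ1, hφ0] at this
  simpa using this

set_option maxHeartbeats 1600000 in
/-- Inequality (20): localization relative to the saddle point `(x*, y*)` is
controlled by the distances to `x*(y)` and `y*(x)`. -/
theorem localization_penalty_lower_bound {d : ℕ} (F : Ed d → Ed d → ℝ)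
    (𝒳 𝒴 : Set (Ed d))
    (hXcvx : Convex ℝ 𝒳) (hXcpt : IsCompact 𝒳) (hXne : 𝒳.Nonempty)
    (hYcvx : Convex ℝ 𝒴) (hYcpt : IsCompact 𝒴) (hYne : 𝒴.Nonempty)
    (nx ny : Ed d → ℝ) (hnx : IsNormFn nx) (hny : IsNormFn ny)
    (σx σy Lxy : ℝ) (hσx : 0 < σx) (hσy : 0 < σy)
    (hdiffx : ∀ y, Differentiable ℝ fun x => F x y)
    (hdiffy : ∀ x, Differentiable ℝ fun y => F x y)
    (hA1x : ∀ y ∈ 𝒴, SCvxOn nx σx 𝒳 fun x => F x y)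
    (hA1y : ∀ x ∈ 𝒳, SCcvOn ny σy 𝒴 fun y => F x y)
    (hA3x : ∀ x ∈ 𝒳, ∀ y ∈ 𝒴, ∀ y' ∈ 𝒴,
      dualN nx (gradient (fun x' => F x' y) x - gradient (fun x' => F x' y') x)
        ≤ Lxy * ny (y - y'))
    (hA3y : ∀ y ∈ 𝒴, ∀ x ∈ 𝒳, ∀ x' ∈ 𝒳,
      dualN ny (gradient (fun y' => F x y') y - gradient (fun y' => F x' y') y)
        ≤ Lxy * nx (x - x'))
    (xstar ystar : Ed d → Ed d)
    (hxstar : ∀ y ∈ 𝒴, IsArgminOn' 𝒳 (fun x => F x y) (xstar y))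
    (hystar : ∀ x ∈ 𝒳, IsArgmaxOn' 𝒴 (fun y => F x y) (ystar x))
    (hA4 : Lxy ≤ min σx σy)
    (xs ys : Ed d) (hsaddle : IsSaddleOn 𝒳 𝒴 F xs ys) :
    ∀ x ∈ 𝒳, ∀ y ∈ 𝒴,
      (1 - Lxy / min σx σy) ^ 2 / 2 * (nx (x - xs) + ny (y - ys)) ^ 2 ≤
        nx (x - xstar y) ^ 2 + ny (y - ystar x) ^ 2 := by
  intro x hx y hy
  obtain ⟨hxsX, hysY, hsp⟩ := hsaddle
  have hm : 0 < min σx σy := lt_min hσx hσy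
  by_cases hL : 0 ≤ Lxy
  · -- main case
    set m := min σx σy with hmdef
    set κ := Lxy / m with hκdef
    have hκ1 : κ ≤ 1 := (div_le_one hm).mpr hA4
    have hκ0 : 0 ≤ κ := div_nonneg hL hm.le
    have hκm : κ * m = Lxy := div_mul_cancel₀ Lxy hm.ne'
    have hcross := cross_bound F 𝒳 𝒴 hXcvx nx ny hnx Lxy hdiffx hA3x
    -- Lipschitz continuity of xstar
    have hxlip : ∀ y₁ ∈ 𝒴, ∀ y₂ ∈ 𝒴,
        σx * nx (xstar y₁ - xstar y₂) ≤ Lxy * ny (y₁ - y₂) := by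
      intro y₁ hy₁ y₂ hy₂
      have hm1 := (hxstar y₁ hy₁).1
      have hm2 := (hxstar y₂ hy₂).1
      have g1 := growth_min (hA1x y₁ hy₁) hXcvx (hxstar y₁ hy₁) (xstar y₂) hm2
      have g2 := growth_min (hA1x y₂ hy₂) hXcvx (hxstar y₂ hy₂) (xstar y₁) hm1
      have hc := hcross (xstar y₂) hm2 (xstar y₁) hm1 y₁ hy₁ y₂ hy₂
      have hsym : nx (xstar y₂ - xstar y₁) = nx (xstar y₁ - xstar y₂) := hnx.sub_symm _ _
      rw [hsym] at g1 hc
      have habs := abs_le.mp hc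
      rcases (hnx.nonneg (xstar y₁ - xstar y₂)).lt_or_eq with hu | hu
      · nlinarith [g1, g2, habs.2, hu]
      · rw [← hu, mul_zero]
        exact mul_nonneg hL (hny.nonneg _)
    -- Lipschitz continuity of ystar
    have hylip : ∀ x₁ ∈ 𝒳, ∀ x₂ ∈ 𝒳,
        σy * ny (ystar x₁ - ystar x₂) ≤ Lxy * nx (x₁ - x₂) := by
      intro x₁ hx₁ x₂ hx₂
      have hm1 := (hystar x₁ hx₁).1
      have hm2 := (hystar x₂ hx₂).1
      have g1 := growth_max (hA1y x₁ hx₁) hYcvx (hystar x₁ hx₁) (ystar x₂) hm2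
      have g2 := growth_max (hA1y x₂ hx₂) hYcvx (hystar x₂ hx₂) (ystar x₁) hm1
      have hc := hcross x₁ hx₁ x₂ hx₂ (ystar x₁) hm1 (ystar x₂) hm2
      have hsym : ny (ystar x₂ - ystar x₁) = ny (ystar x₁ - ystar x₂) := hny.sub_symm _ _
      rw [hsym] at g1
      have habs := abs_le.mp hc
      rcases (hny.nonneg (ystar x₁ - ystar x₂)).lt_or_eq with hu | hu
      · nlinarith [g1, g2, habs.2, hu]
      · rw [← hu, mul_zero]
        exact mul_nonneg hL (hnx.nonneg _)
    -- xstar ys is xs (in the norm sense)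
    have hxs0 : nx (xstar ys - xs) = 0 := by
      have g := growth_min (hA1x ys hysY) hXcvx (hxstar ys hysY) xs hxsX
      have hle : F xs ys ≤ F (xstar ys) ys := (hsp (xstar ys) (hxstar ys hysY).1 ys hysY).2
      have hsym : nx (xs - xstar ys) = nx (xstar ys - xs) := hnx.sub_symm _ _
      rw [hsym] at g
      refine le_antisymm ?_ (hnx.nonneg _)
      by_contra hpos
      push_neg at hpos
      have hp : 0 < σx / 2 * nx (xstar ys - xs) ^ 2 := by positivity
      linarith
    have hys0 : ny (ystar xs - ys) = 0 := by
      have g := growth_max (hA1y xs hxsX) hYcvx (hystar xs hxsX) ys hysY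
      have hle : F xs (ystar xs) ≤ F xs ys := (hsp xs hxsX (ystar xs) (hystar xs hxsX).1).1
      have hsym : ny (ys - ystar xs) = ny (ystar xs - ys) := hny.sub_symm _ _
      rw [hsym] at g
      refine le_antisymm ?_ (hny.nonneg _)
      by_contra hpos
      push_neg at hpos
      have hp : 0 < σy / 2 * ny (ystar xs - ys) ^ 2 := by positivity
      linarith
    set a := nx (x - xs) with hadef
    set b := ny (y - ys) with hbdef
    set A := nx (x - xstar y) with hAdef
    set B := ny (y - ystar x) with hBdef
    have ha0 : 0 ≤ a := hnx.nonneg _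
    have hb0 : 0 ≤ b := hny.nonneg _
    have hA0 : 0 ≤ A := hnx.nonneg _
    have hB0 : 0 ≤ B := hny.nonneg _
    have hstep1 : nx (xstar y - xstar ys) ≤ κ * b := by
      have h1 := hxlip y hy ys hysY
      have h2 : m * nx (xstar y - xstar ys) ≤ σx * nx (xstar y - xstar ys) :=
        mul_le_mul_of_nonneg_right (min_le_left _ _) (hnx.nonneg _)
      nlinarith [h1, h2, hκm, hm]
    have hstep2 : ny (ystar x - ystar xs) ≤ κ * a := by
      have h1 := hylip x hx xs hxsX
      have h2 : m * ny (ystar x - ystar xs) ≤ σy * ny (ystar x - ystar xs) :=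
        mul_le_mul_of_nonneg_right (min_le_right _ _) (hny.nonneg _)
      nlinarith [h1, h2, hκm, hm]
    have ha : a ≤ A + κ * b := by
      have t1 : x - xs = (x - xstar y) + ((xstar y - xstar ys) + (xstar ys - xs)) := by
        module
      have t2 : a ≤ A + nx ((xstar y - xstar ys) + (xstar ys - xs)) := by
        rw [hadef, t1]; exact hnx.triangle _ _
      have t3 : nx ((xstar y - xstar ys) + (xstar ys - xs)) ≤
          nx (xstar y - xstar ys) + nx (xstar ys - xs) := hnx.triangle _ _
      rw [hxs0] at t3
      linarith [hstep1]
    have hb : b ≤ B + κ * a := by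
      have t1 : y - ys = (y - ystar x) + ((ystar x - ystar xs) + (ystar xs - ys)) := by
        module
      have t2 : b ≤ B + ny ((ystar x - ystar xs) + (ystar xs - ys)) := by
        rw [hbdef, t1]; exact hny.triangle _ _
      have t3 : ny ((ystar x - ystar xs) + (ystar xs - ys)) ≤
          ny (ystar x - ystar xs) + ny (ystar xs - ys) := hny.triangle _ _
      rw [hys0] at t3
      linarith [hstep2]
    clear hcross hxlip hylip hA3x hA3y hdiffx hdiffy hsp hA1x hA1y hxstar hystar hxs0 hys0
    have hsum : (1 - κ) * (a + b) ≤ A + B := by linarith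
    have hnn : 0 ≤ (1 - κ) * (a + b) := mul_nonneg (by linarith) (by linarith)
    have hsq : ((1 - κ) * (a + b)) ^ 2 ≤ (A + B) ^ 2 := pow_le_pow_left₀ hnn hsum 2
    have heq : (1 - κ) ^ 2 / 2 * (a + b) ^ 2 = ((1 - κ) * (a + b)) ^ 2 / 2 := by ring
    have hfin : (A + B) ^ 2 / 2 ≤ A ^ 2 + B ^ 2 := by nlinarith [sq_nonneg (A - B)]
    rw [heq]
    linarith
  · -- degenerate case Lxy < 0
    push_neg at hL
    have ha : nx (x - xs) = 0 := by
      have h0 := hny.dualN_nonneg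
        (gradient (fun y' => F x y') ys - gradient (fun y' => F xs y') ys)
      have h1 := hA3y ys hysY x hx xs hxsX
      have h2 : 0 ≤ Lxy * nx (x - xs) := h0.trans h1
      refine le_antisymm ?_ (hnx.nonneg _)
      nlinarith [hnx.nonneg (x - xs)]
    have hb : ny (y - ys) = 0 := by
      have h0 := hnx.dualN_nonneg
        (gradient (fun x' => F x' y) xs - gradient (fun x' => F x' ys) xs)
      have h1 := hA3x xs hxsX y hy ys hysY
      have h2 : 0 ≤ Lxy * ny (y - ys) := h0.trans h1
      refine le_antisymm ?_ (hny.nonneg _)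
      nlinarith [hny.nonneg (y - ys)]
    clear hA3x hA3y hdiffx hdiffy hsp hA1x hA1y hxstar hystar
    rw [ha, hb]
    have hz : ((0:ℝ) + 0) ^ 2 = 0 := by norm_num
    rw [hz, mul_zero]
    positivity
end
end

section
/- Under assumptions (A1), (A3) and (A4), with C = 1 − L_{x,y}/min(σ_x, σ_y), for every r > 0, every integer k ≥ 0, and every (x, y) ∈ 𝒳 × 𝒴 with ‖x − x*‖_x + ‖y − y*‖_y ≥ 2^k·r, the quadratic penalty on the annulus is bounded below: (σ_y/8)·‖y − y*(x)‖_y² + (σ_x/8)·‖x − x*(y)‖_x² ≥ min(σ_x, σ_y)·C²·4^{k−2}·r². -/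
open MeasureTheory Real Set

noncomputable section

section Aux

variable {d : ℕ} {N : Ed d → ℝ}

lemma IsNormFn.zero' (hN : IsNormFn N) : N 0 = 0 := by
  have := hN.smul_eq 0 0
  simpa using this

lemma IsNormFn.neg' (hN : IsNormFn N) (v : Ed d) : N (-v) = N v := by
  have := hN.smul_eq (-1) v
  simpa using this

lemma IsNormFn.sub_symm_s13 (hN : IsNormFn N) (a b : Ed d) : N (a - b) = N (b - a) := by
  rw [← neg_sub b a, hN.neg']

lemma IsNormFn.sum_le_s13 (hN : IsNormFn N) {ι : Type*} (t : Finset ι) (g : ι → Ed d) :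
    N (∑ i ∈ t, g i) ≤ ∑ i ∈ t, N (g i) := by
  classical
  induction t using Finset.induction_on with
  | empty => simp [hN.zero']
  | insert a s hni ih =>
    rw [Finset.sum_insert hni, Finset.sum_insert hni]
    exact (hN.triangle _ _).trans (by linarith)

lemma IsNormFn.le_norm (hN : IsNormFn N) :
    ∃ K : ℝ, 0 ≤ K ∧ ∀ v, N v ≤ K * ‖v‖ := by
  classical
  refine ⟨∑ i, N (EuclideanSpace.single i (1:ℝ)),
    Finset.sum_nonneg fun i _ => hN.nonneg _, fun v => ?_⟩
  have hrepr : v = ∑ i, v i • EuclideanSpace.single i (1:ℝ) := by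
    have h := (EuclideanSpace.basisFun (Fin d) ℝ).sum_repr v
    simp only [EuclideanSpace.basisFun_apply, EuclideanSpace.basisFun_repr] at h
    exact h.symm
  have hcoord : ∀ i, |v i| ≤ ‖v‖ := by
    intro i
    have h1 : (inner ℝ (EuclideanSpace.single i (1:ℝ)) v : ℝ) = v i := by
      simp [EuclideanSpace.inner_single_left]
    have h2 := abs_real_inner_le_norm (EuclideanSpace.single i (1:ℝ)) v
    rw [h1, EuclideanSpace.norm_single] at h2
    simpa using h2
  calc N v = N (∑ i, v i • EuclideanSpace.single i (1:ℝ)) := by rw [← hrepr]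
    _ ≤ ∑ i, N (v i • EuclideanSpace.single i (1:ℝ)) := hN.sum_le_s13 _ _
    _ = ∑ i, |v i| * N (EuclideanSpace.single i (1:ℝ)) := by
        simp [hN.smul_eq]
    _ ≤ ∑ i, ‖v‖ * N (EuclideanSpace.single i (1:ℝ)) := by
        refine Finset.sum_le_sum fun i _ => ?_
        exact mul_le_mul_of_nonneg_right (hcoord i) (hN.nonneg _)
    _ = (∑ i, N (EuclideanSpace.single i (1:ℝ))) * ‖v‖ := by
        rw [← Finset.mul_sum, mul_comm]

lemma IsNormFn.norm_le (hN : IsNormFn N) :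
    ∃ c : ℝ, 0 < c ∧ ∀ v, c * ‖v‖ ≤ N v := by
  obtain ⟨K, hK0, hK⟩ := hN.le_norm
  have habs : ∀ a b : Ed d, |N a - N b| ≤ K * ‖a - b‖ := by
    intro a b
    have h1 : N a - N b ≤ N (a - b) := by
      have := hN.triangle (a - b) b
      simpa using this
    have h2 : N b - N a ≤ N (a - b) := by
      have := hN.triangle (b - a) a
      rw [hN.sub_symm_s13 a b]
      simpa using this
    have := hK (a - b)
    rw [abs_sub_le_iff]
    constructor <;> linarith
  have hcont : Continuous N := by
    have hlip : LipschitzWith K.toNNReal N := by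
      apply LipschitzWith.of_dist_le_mul
      intro a b
      rw [Real.dist_eq, dist_eq_norm, Real.coe_toNNReal K hK0]
      exact habs a b
    exact hlip.continuous
  by_cases hne : (Metric.sphere (0 : Ed d) 1).Nonempty
  · obtain ⟨w, hw, hwmin⟩ :=
      (isCompact_sphere (0 : Ed d) 1).exists_isMinOn hne hcont.continuousOn
    have hw1 : ‖w‖ = 1 := mem_sphere_zero_iff_norm.mp hw
    have hw0 : w ≠ 0 := by
      intro h; rw [h, norm_zero] at hw1; norm_num at hw1
    have hcpos : 0 < N w := by
      rcases (hN.nonneg w).lt_or_eq with h | h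
      · exact h
      · exact absurd (hN.eq_zero w h.symm) hw0
    refine ⟨N w, hcpos, fun v => ?_⟩
    rcases eq_or_ne v 0 with rfl | hv
    · simp [hN.zero']
    · have hnv : 0 < ‖v‖ := norm_pos_iff.mpr hv
      have hmem : ‖v‖⁻¹ • v ∈ Metric.sphere (0 : Ed d) 1 := by
        rw [mem_sphere_zero_iff_norm, norm_smul, norm_inv, norm_norm]
        field_simp
      have hle : N w ≤ N (‖v‖⁻¹ • v) := hwmin hmem
      have hNu : N (‖v‖⁻¹ • v) = ‖v‖⁻¹ * N v := by
        rw [hN.smul_eq, abs_of_pos (inv_pos.mpr hnv)]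
      rw [hNu] at hle
      calc N w * ‖v‖ ≤ ‖v‖⁻¹ * N v * ‖v‖ :=
        mul_le_mul_of_nonneg_right hle hnv.le
        _ = N v := by field_simp
  · refine ⟨1, one_pos, fun v => ?_⟩
    have hv : v = 0 := by
      by_contra hv
      have hnv : 0 < ‖v‖ := norm_pos_iff.mpr hv
      exact hne ⟨‖v‖⁻¹ • v, by
        rw [mem_sphere_zero_iff_norm, norm_smul, norm_inv, norm_norm]; field_simp⟩
    rw [hv]
    simp [hN.zero']

lemma dualN_bddAbove (hN : IsNormFn N) (v : Ed d) :
    BddAbove {r | ∃ u : Ed d, N u ≤ 1 ∧ r = |(inner ℝ u v : ℝ)|} := by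
  obtain ⟨c, hc, hcl⟩ := hN.norm_le
  refine ⟨‖v‖ / c, fun r hr => ?_⟩
  obtain ⟨u, hu, rfl⟩ := hr
  have h1 : ‖u‖ ≤ 1 / c := by
    rw [le_div_iff₀ hc]
    calc ‖u‖ * c = c * ‖u‖ := mul_comm _ _
      _ ≤ N u := hcl u
      _ ≤ 1 := hu
  calc |(inner ℝ u v : ℝ)| ≤ ‖u‖ * ‖v‖ := abs_real_inner_le_norm u v
    _ ≤ (1 / c) * ‖v‖ := mul_le_mul_of_nonneg_right h1 (norm_nonneg v)
    _ = ‖v‖ / c := by ring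

lemma dualN_nonneg (hN : IsNormFn N) (v : Ed d) : 0 ≤ dualN N v :=
  le_csSup (dualN_bddAbove hN v) ⟨0, by simp [hN.zero'], by simp⟩

lemma abs_inner_le_dualN (hN : IsNormFn N) (v w : Ed d) :
    |(inner ℝ w v : ℝ)| ≤ dualN N v * N w := by
  rcases (hN.nonneg w).eq_or_lt with h | h
  · have hw0 : w = 0 := hN.eq_zero w h.symm
    rw [hw0, hN.zero', mul_zero]
    simp
  · have hu : N ((N w)⁻¹ • w) ≤ 1 := by
      rw [hN.smul_eq, abs_of_pos (inv_pos.mpr h)]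
      rw [inv_mul_cancel₀ (ne_of_gt h)]
    have hmem : |(inner ℝ ((N w)⁻¹ • w) v : ℝ)| ∈
        {r | ∃ u : Ed d, N u ≤ 1 ∧ r = |(inner ℝ u v : ℝ)|} := ⟨_, hu, rfl⟩
    have h1 : |(inner ℝ ((N w)⁻¹ • w) v : ℝ)| ≤ dualN N v :=
      le_csSup (dualN_bddAbove hN v) hmem
    have h2 : |(inner ℝ ((N w)⁻¹ • w) v : ℝ)| = (N w)⁻¹ * |(inner ℝ w v : ℝ)| := by
      rw [real_inner_smul_left, abs_mul, abs_of_pos (inv_pos.mpr h)]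
    rw [h2] at h1
    have := mul_le_mul_of_nonneg_right h1 h.le
    calc |(inner ℝ w v : ℝ)| = (N w)⁻¹ * |(inner ℝ w v : ℝ)| * N w := by
          field_simp
      _ ≤ dualN N v * N w := this

lemma diff_bound (hN : IsNormFn N) {s : Set (Ed d)} (hs : Convex ℝ s)
    {f f' : Ed d → ℝ} (hf : Differentiable ℝ f) (hf' : Differentiable ℝ f')
    {M : ℝ} (hM : ∀ z ∈ s, dualN N (gradient f z - gradient f' z) ≤ M)
    {u u' : Ed d} (hu : u ∈ s) (hu' : u' ∈ s) :
    |(f u' - f' u') - (f u - f' u)| ≤ M * N (u' - u) := by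
  set w := u' - u with hw
  set g : Ed d → ℝ := fun z => f z - f' z with hg
  set z : ℝ → Ed d := fun t => u + t • w with hz
  have hzs : ∀ t ∈ Icc (0:ℝ) 1, z t ∈ s := by
    intro t ht
    have hzt : z t = (1 - t) • u + t • u' := by
      simp only [hz, hw]
      module
    rw [hzt]
    exact hs hu hu' (by linarith [ht.2]) ht.1 (by ring)
  have hderiv : ∀ t : ℝ, HasDerivAt (fun t => g (z t))
      (fderiv ℝ f (z t) w - fderiv ℝ f' (z t) w) t := by
    intro t
    have hline : HasDerivAt z w t := by
      have h := ((hasDerivAt_id t).smul_const w).const_add u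
      rw [one_smul] at h
      exact h
    have hgF : HasFDerivAt g (fderiv ℝ f (z t) - fderiv ℝ f' (z t)) (z t) :=
      (hf (z t)).hasFDerivAt.sub (hf' (z t)).hasFDerivAt
    exact hgF.comp_hasDerivAt t hline
  have hbound : ∀ t ∈ Ico (0:ℝ) 1,
      ‖fderiv ℝ f (z t) w - fderiv ℝ f' (z t) w‖ ≤ M * N w := by
    intro t ht
    have hzmem := hzs t (Ico_subset_Icc_self ht)
    have e1 : fderiv ℝ f (z t) w = (inner ℝ (gradient f (z t)) w : ℝ) := by
      have h1 : HasFDerivAt f ((InnerProductSpace.toDual ℝ (Ed d)) (gradient f (z t))) (z t) :=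
        (hf (z t)).hasGradientAt.hasFDerivAt
      rw [h1.fderiv, InnerProductSpace.toDual_apply_apply]
    have e2 : fderiv ℝ f' (z t) w = (inner ℝ (gradient f' (z t)) w : ℝ) := by
      have h1 : HasFDerivAt f' ((InnerProductSpace.toDual ℝ (Ed d)) (gradient f' (z t))) (z t) :=
        (hf' (z t)).hasGradientAt.hasFDerivAt
      rw [h1.fderiv, InnerProductSpace.toDual_apply_apply]
    rw [Real.norm_eq_abs, e1, e2, ← inner_sub_left, real_inner_comm]
    calc |(inner ℝ w (gradient f (z t) - gradient f' (z t)) : ℝ)|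
        ≤ dualN N (gradient f (z t) - gradient f' (z t)) * N w :=
          abs_inner_le_dualN hN (gradient f (z t) - gradient f' (z t)) w
      _ ≤ M * N w := mul_le_mul_of_nonneg_right (hM _ hzmem) (hN.nonneg w)
  have hmvt := norm_image_sub_le_of_norm_deriv_le_segment_01'
    (f := fun t => g (z t))
    (f' := fun t => fderiv ℝ f (z t) w - fderiv ℝ f' (z t) w)
    (fun t _ => (hderiv t).hasDerivWithinAt) hbound
  have hmvt' : |g u' - g u| ≤ M * N w := by
    simpa [hz, hw, Real.norm_eq_abs] using hmvt
  simpa [hg] using hmvt'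

lemma sccv_neg {σ : ℝ} {s : Set (Ed d)} {f : Ed d → ℝ} (h : SCcvOn N σ s f) :
    SCvxOn N σ s (fun y => -(f y)) := by
  intro y hy y' hy' α h0 h1
  have := h y hy y' hy' α h0 h1
  simp only []
  linarith

lemma qgrowth {σ : ℝ} {s : Set (Ed d)} {f : Ed d → ℝ} (hs : Convex ℝ s)
    (hf : SCvxOn N σ s f) {x0 : Ed d} (hmin : IsArgminOn' s f x0) :
    ∀ x ∈ s, f x0 + σ / 2 * N (x0 - x) ^ 2 ≤ f x := by
  intro x hx
  have key : ∀ α : ℝ, 0 ≤ α → α < 1 → σ * α / 2 * N (x0 - x) ^ 2 ≤ f x - f x0 := by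
    intro α h0 h1
    have hmem : α • x0 + (1 - α) • x ∈ s := hs hmin.1 hx h0 (by linarith) (by ring)
    have h2 := hf x0 hmin.1 x hx α h0 h1.le
    have h3 := hmin.2 _ hmem
    have h5 : 0 ≤ (1 - α) * ((f x - f x0) - σ * α / 2 * N (x0 - x) ^ 2) := by nlinarith
    have h6 : 0 ≤ (f x - f x0) - σ * α / 2 * N (x0 - x) ^ 2 :=
      nonneg_of_mul_nonneg_right h5 (by linarith)
    linarith
  have h0 : Filter.Tendsto (fun n : ℕ => 1 - 1 / ((n : ℝ) + 1)) Filter.atTop (nhds 1) := by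
    have : Filter.Tendsto (fun n : ℕ => 1 / ((n : ℝ) + 1)) Filter.atTop (nhds 0) :=
      tendsto_one_div_add_atTop_nhds_zero_nat
    simpa using (Filter.Tendsto.sub (tendsto_const_nhds (x := (1:ℝ))) this)
  have htend : Filter.Tendsto
      (fun n : ℕ => σ * (1 - 1 / ((n : ℝ) + 1)) / 2 * N (x0 - x) ^ 2) Filter.atTop
      (nhds (σ * 1 / 2 * N (x0 - x) ^ 2)) := by
    simpa using ((h0.const_mul σ).div_const 2).mul_const (N (x0 - x) ^ 2)
  have hle : σ * 1 / 2 * N (x0 - x) ^ 2 ≤ f x - f x0 := by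
    refine le_of_tendsto htend (Filter.Eventually.of_forall fun n => ?_)
    have hp : (0:ℝ) < (n : ℝ) + 1 := by positivity
    refine key _ ?_ ?_
    · have : 1 / ((n : ℝ) + 1) ≤ 1 := by
        rw [div_le_one hp]; linarith [(Nat.cast_nonneg n : (0:ℝ) ≤ (n:ℝ))]
      linarith
    · have : 0 < 1 / ((n : ℝ) + 1) := by positivity
      linarith
  linarith

lemma argmin_unique {σ : ℝ} {s : Set (Ed d)} {f : Ed d → ℝ} (hN : IsNormFn N)
    (hσ : 0 < σ) (hs : Convex ℝ s) (hf : SCvxOn N σ s f)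
    {a b : Ed d} (ha : IsArgminOn' s f a) (hb : IsArgminOn' s f b) : a = b := by
  have hmem : (1/2 : ℝ) • a + (1/2 : ℝ) • b ∈ s :=
    hs ha.1 hb.1 (by norm_num) (by norm_num) (by norm_num)
  have h2 := hf a ha.1 b hb.1 (1/2) (by norm_num) (by norm_num)
  rw [show (1:ℝ) - 1/2 = 1/2 by norm_num] at h2
  have h3 := ha.2 _ hmem
  have h4 := hb.2 _ hmem
  have h5 : N (a - b) ^ 2 ≤ 0 := by nlinarith
  have h6 : N (a - b) = 0 := by
    have := pow_eq_zero_iff (n := 2) (by norm_num) |>.mp (le_antisymm h5 (sq_nonneg _))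
    exact this
  exact sub_eq_zero.mp (hN.eq_zero _ h6)

lemma argmin_lip (hN : IsNormFn N) {σ M : ℝ} (hσ : 0 < σ) (hM : 0 ≤ M)
    {f f' : Ed d → ℝ} {u u' : Ed d}
    (h1 : f u + σ / 2 * N (u - u') ^ 2 ≤ f u')
    (h2 : f' u' + σ / 2 * N (u' - u) ^ 2 ≤ f' u)
    (h3 : |(f u' - f' u') - (f u - f' u)| ≤ M * N (u' - u)) :
    N (u - u') ≤ M / σ := by
  have hsym : N (u - u') = N (u' - u) := hN.sub_symm_s13 u u'
  have htn : 0 ≤ N (u' - u) := hN.nonneg _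
  have key : σ * N (u' - u) ^ 2 ≤ M * N (u' - u) := by
    have habs := (abs_le.mp h3).2
    rw [hsym] at h1
    nlinarith
  rw [hsym]
  rcases htn.eq_or_lt with h | h
  · rw [← h]; positivity
  · rw [le_div_iff₀ hσ]
    have := le_of_mul_le_mul_right (by nlinarith : σ * N (u' - u) * N (u' - u) ≤ M * N (u' - u)) h
    linarith

end Aux

set_option maxHeartbeats 2000000 in
/-- Lower bound for the quadratic penalty on the annulus
`‖x − x*‖ₓ + ‖y − y*‖_y ≥ 2^k r`. -/
theorem annulus_penalty_lower_bound {d : ℕ} (F : Ed d → Ed d → ℝ)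
    (𝒳 𝒴 : Set (Ed d))
    (hXcvx : Convex ℝ 𝒳) (hXcpt : IsCompact 𝒳) (hXne : 𝒳.Nonempty)
    (hYcvx : Convex ℝ 𝒴) (hYcpt : IsCompact 𝒴) (hYne : 𝒴.Nonempty)
    (nx ny : Ed d → ℝ) (hnx : IsNormFn nx) (hny : IsNormFn ny)
    (σx σy Lxy : ℝ) (hσx : 0 < σx) (hσy : 0 < σy)
    (hdiffx : ∀ y, Differentiable ℝ fun x => F x y)
    (hdiffy : ∀ x, Differentiable ℝ fun y => F x y)
    (hA1x : ∀ y ∈ 𝒴, SCvxOn nx σx 𝒳 fun x => F x y)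
    (hA1y : ∀ x ∈ 𝒳, SCcvOn ny σy 𝒴 fun y => F x y)
    (hA3x : ∀ x ∈ 𝒳, ∀ y ∈ 𝒴, ∀ y' ∈ 𝒴,
      dualN nx (gradient (fun x' => F x' y) x - gradient (fun x' => F x' y') x)
        ≤ Lxy * ny (y - y'))
    (hA3y : ∀ y ∈ 𝒴, ∀ x ∈ 𝒳, ∀ x' ∈ 𝒳,
      dualN ny (gradient (fun y' => F x y') y - gradient (fun y' => F x' y') y)
        ≤ Lxy * nx (x - x'))
    (xstar ystar : Ed d → Ed d)
    (hxstar : ∀ y ∈ 𝒴, IsArgminOn' 𝒳 (fun x => F x y) (xstar y))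
    (hystar : ∀ x ∈ 𝒳, IsArgmaxOn' 𝒴 (fun y => F x y) (ystar x))
    (hA4 : Lxy ≤ min σx σy)
    (xs ys : Ed d) (hsaddle : IsSaddleOn 𝒳 𝒴 F xs ys) :
    ∀ r : ℝ, 0 < r → ∀ k : ℕ, ∀ x ∈ 𝒳, ∀ y ∈ 𝒴,
      (2 : ℝ) ^ k * r ≤ nx (x - xs) + ny (y - ys) →
      min σx σy * (1 - Lxy / min σx σy) ^ 2 * (4 : ℝ) ^ ((k : ℤ) - 2) * r ^ 2 ≤
        σy / 8 * ny (y - ystar x) ^ 2 + σx / 8 * nx (x - xstar y) ^ 2 := by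
  
  intro r hr k x hx y hy hann
  obtain ⟨hxs, hys, hsad⟩ := hsaddle
  set m := min σx σy with hmdef
  have hm : 0 < m := lt_min hσx hσy
  have hmx : m ≤ σx := min_le_left _ _
  have hmy : m ≤ σy := min_le_right _ _
  -- xstar ys = xs
  have hxsmin : IsArgminOn' 𝒳 (fun x => F x ys) xs :=
    ⟨hxs, fun x' hx' => (hsad x' hx' ys hys).2⟩
  have hx_eq : xstar ys = xs :=
    argmin_unique hnx hσx hXcvx (hA1x ys hys) (hxstar ys hys) hxsmin
  -- ystar xs = ys
  have hysmin : IsArgminOn' 𝒴 (fun y => -(F xs y)) ys :=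
    ⟨hys, fun y' hy' => neg_le_neg (hsad xs hxs y' hy').1⟩
  have hy_eq : ystar xs = ys := by
    refine argmin_unique hny hσy hYcvx (sccv_neg (hA1y xs hxs)) ?_ hysmin
    exact ⟨(hystar xs hxs).1, fun y' hy' => neg_le_neg ((hystar xs hxs).2 y' hy')⟩
  -- Lipschitz property of xstar
  have hlipx : ∀ y₁ ∈ 𝒴, ∀ y₂ ∈ 𝒴,
      nx (xstar y₁ - xstar y₂) ≤ (Lxy * ny (y₁ - y₂)) / σx := by
    intro y₁ h₁ y₂ h₂
    have hM0 : 0 ≤ Lxy * ny (y₁ - y₂) :=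
      (dualN_nonneg hnx _).trans (hA3x xs hxs y₁ h₁ y₂ h₂)
    have g1 := qgrowth hXcvx (hA1x y₁ h₁) (hxstar y₁ h₁) (xstar y₂) (hxstar y₂ h₂).1
    have g2 := qgrowth hXcvx (hA1x y₂ h₂) (hxstar y₂ h₂) (xstar y₁) (hxstar y₁ h₁).1
    have hdb := diff_bound hnx hXcvx (hdiffx y₁) (hdiffx y₂)
      (fun z hz => hA3x z hz y₁ h₁ y₂ h₂) (hxstar y₁ h₁).1 (hxstar y₂ h₂).1
    exact argmin_lip (f := fun x' => F x' y₁) (f' := fun x' => F x' y₂)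
      (u := xstar y₁) (u' := xstar y₂) hnx hσx hM0 g1 g2 hdb
  -- Lipschitz property of ystar
  have hlipy : ∀ x₁ ∈ 𝒳, ∀ x₂ ∈ 𝒳,
      ny (ystar x₁ - ystar x₂) ≤ (Lxy * nx (x₁ - x₂)) / σy := by
    intro x₁ h₁ x₂ h₂
    have hM0 : 0 ≤ Lxy * nx (x₁ - x₂) :=
      (dualN_nonneg hny _).trans (hA3y ys hys x₁ h₁ x₂ h₂)
    have hu1 : IsArgminOn' 𝒴 (fun y => -(F x₁ y)) (ystar x₁) :=
      ⟨(hystar x₁ h₁).1, fun y' hy' => neg_le_neg ((hystar x₁ h₁).2 y' hy')⟩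
    have hu2 : IsArgminOn' 𝒴 (fun y => -(F x₂ y)) (ystar x₂) :=
      ⟨(hystar x₂ h₂).1, fun y' hy' => neg_le_neg ((hystar x₂ h₂).2 y' hy')⟩
    have g1 := qgrowth hYcvx (sccv_neg (hA1y x₁ h₁)) hu1 (ystar x₂) hu2.1
    have g2 := qgrowth hYcvx (sccv_neg (hA1y x₂ h₂)) hu2 (ystar x₁) hu1.1
    have hdb := diff_bound hny hYcvx (hdiffy x₂) (hdiffy x₁)
      (M := Lxy * nx (x₁ - x₂))
      (fun z hz => by
        rw [hnx.sub_symm_s13 x₁ x₂]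
        exact hA3y z hz x₂ h₂ x₁ h₁) hu1.1 hu2.1
    have h3 : |((fun y => -(F x₁ y)) (ystar x₂) - (fun y => -(F x₂ y)) (ystar x₂)) -
        ((fun y => -(F x₁ y)) (ystar x₁) - (fun y => -(F x₂ y)) (ystar x₁))| ≤
        (Lxy * nx (x₁ - x₂)) * ny (ystar x₂ - ystar x₁) := by
      have heq : ((fun y => -(F x₁ y)) (ystar x₂) - (fun y => -(F x₂ y)) (ystar x₂)) -
          ((fun y => -(F x₁ y)) (ystar x₁) - (fun y => -(F x₂ y)) (ystar x₁)) =
          (F x₂ (ystar x₂) - F x₁ (ystar x₂)) - (F x₂ (ystar x₁) - F x₁ (ystar x₁)) := by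
        simp only []
        ring
      rw [heq]
      exact hdb
    exact argmin_lip (f := fun y => -(F x₁ y)) (f' := fun y => -(F x₂ y))
      (u := ystar x₁) (u' := ystar x₂) hny hσy hM0 g1 g2 h3
  -- abbreviations
  set a := nx (x - xstar y) with hadef
  set b := ny (y - ystar x) with hbdef
  set p := nx (x - xs) with hpdef
  set q := ny (y - ys) with hqdef
  have ha0 : 0 ≤ a := hnx.nonneg _
  have hb0 : 0 ≤ b := hny.nonneg _
  have hq0 : 0 ≤ Lxy * q := (dualN_nonneg hnx _).trans (hA3x x hx y hy ys hys)
  have hp0 : 0 ≤ Lxy * p := (dualN_nonneg hny _).trans (hA3y y hy x hx xs hxs)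
  have key1 : p ≤ a + (Lxy * q) / σx := by
    have t1 : p ≤ a + nx (xstar y - xs) := by
      have := hnx.triangle (x - xstar y) (xstar y - xs)
      rw [sub_add_sub_cancel] at this
      exact this
    have t2 : nx (xstar y - xs) ≤ (Lxy * q) / σx := by
      rw [← hx_eq]
      exact hlipx y hy ys hys
    linarith
  have key2 : q ≤ b + (Lxy * p) / σy := by
    have t1 : q ≤ b + ny (ystar x - ys) := by
      have := hny.triangle (y - ystar x) (ystar x - ys)
      rw [sub_add_sub_cancel] at this
      exact this
    have t2 : ny (ystar x - ys) ≤ (Lxy * p) / σy := by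
      rw [← hy_eq]
      exact hlipy x hx xs hxs
    linarith
  have hdiv1 : (Lxy * q) / σx ≤ (Lxy * q) / m := by gcongr
  have hdiv2 : (Lxy * p) / σy ≤ (Lxy * p) / m := by gcongr
  have hsum : (1 - Lxy / m) * (p + q) ≤ a + b := by
    have hexp : Lxy / m * (p + q) = (Lxy * p) / m + (Lxy * q) / m := by ring
    nlinarith [key1, key2, hdiv1, hdiv2]
  have hC : 0 ≤ 1 - Lxy / m := by
    have : Lxy / m ≤ 1 := (div_le_one hm).mpr hA4
    linarith
  have hfin : (1 - Lxy / m) * ((2:ℝ) ^ k * r) ≤ a + b :=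
    le_trans (mul_le_mul_of_nonneg_left hann hC) hsum
  have h42 : ((2:ℝ) ^ k) ^ 2 = (4:ℝ) ^ k := by
    rw [← pow_mul, show (4:ℝ) = 2 ^ 2 by norm_num, ← pow_mul, mul_comm]
  have h4k : (4:ℝ) ^ ((k : ℤ) - 2) = ((2:ℝ) ^ k) ^ 2 / 16 := by
    rw [zpow_sub₀ (by norm_num : (4:ℝ) ≠ 0), zpow_natCast, h42]
    norm_num
  rw [h4k]
  have hE : (0:ℝ) < (2:ℝ) ^ k := by positivity
  have hCEr : 0 ≤ (1 - Lxy / m) * ((2:ℝ) ^ k * r) :=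
    mul_nonneg hC (by positivity)
  have s1 : ((1 - Lxy / m) * ((2:ℝ) ^ k * r)) ^ 2 ≤ (a + b) ^ 2 :=
    pow_le_pow_left₀ hCEr hfin 2
  nlinarith [mul_le_mul_of_nonneg_left s1 hm.le,
    mul_nonneg hm.le (sq_nonneg (a - b)),
    mul_le_mul_of_nonneg_right hmx (sq_nonneg a),
    mul_le_mul_of_nonneg_right hmy (sq_nonneg b)]
end
end

section
/- For any λ > 0, the negative-entropy function V(x) = λ·∑_{i=1}^d x_i·log(x_i) is λ-strongly convex with respect to the ℓ₁ norm on the probability simplex {x ∈ ℝ^d : x_i ≥ 0 for all i, ∑_{i=1}^d x_i = 1}; that is, for all x, x′ in the simplex and all α ∈ [0,1]: V(αx + (1−α)x′) ≤ α·V(x) + (1−α)·V(x′) − (λ·α·(1−α)/2)·‖x − x′‖₁². -/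
open Real

noncomputable section

/-- derivative of the rational part `q t = 3*(t-1)*(t+5)/(2*(t+2)^2)` -/
private lemma hasDerivAt_q {t : ℝ} (ht : 0 < t) :
    HasDerivAt (fun s => 3*(s-1)*(s+5)/(2*(s+2)^2)) (27/(t+2)^3) t := by
  have h2 : (2*(t+2)^2 : ℝ) ≠ 0 := by positivity
  have hu : HasDerivAt (fun s : ℝ => 3*(s-1)*(s+5)) (3*(t-1) + 3*(t+5)) t := by
    have h1 := (((hasDerivAt_id t).sub_const 1).const_mul (3:ℝ)).mul ((hasDerivAt_id t).add_const (5:ℝ))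
    exact h1.congr_deriv (by simp only [id_eq]; ring)
  have hv : HasDerivAt (fun s : ℝ => 2*(s+2)^2) (2*(2*(t+2))) t := by
    have h1 := (((hasDerivAt_id t).add_const (2:ℝ)).pow 2).const_mul (2:ℝ)
    exact h1.congr_deriv (by simp only [id_eq]; ring)
  have := hu.div hv h2
  refine this.congr_deriv ?_
  field_simp
  ring

private lemma hasDerivAt_g1 {t : ℝ} (ht : 0 < t) :
    HasDerivAt (fun s => log s - 3*(s-1)*(s+5)/(2*(s+2)^2)) (1/t - 27/(t+2)^3) t := by
  have := (Real.hasDerivAt_log ht.ne').sub (hasDerivAt_q ht)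
  rw [one_div]; exact this

private lemma hasDerivAt_g {t : ℝ} (ht : 0 < t) :
    HasDerivAt (fun s => s * log s - s + 1 - 3*(s-1)^2/(2*(s+2)))
      (log t - 3*(t-1)*(t+5)/(2*(t+2)^2)) t := by
  have h2 : (2*(t+2) : ℝ) ≠ 0 := by positivity
  have hu : HasDerivAt (fun s : ℝ => 3*(s-1)^2) (3*(2*(t-1))) t := by
    have h1 := (((hasDerivAt_id t).sub_const 1).pow 2).const_mul (3:ℝ)
    exact h1.congr_deriv (by simp only [id_eq]; ring)
  have hv : HasDerivAt (fun s : ℝ => 2*(s+2)) (2:ℝ) t := by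
    simpa using ((hasDerivAt_id t).add_const (2:ℝ)).const_mul (2:ℝ)
  have hq := hu.div hv h2
  have hml := Real.hasDerivAt_mul_log ht.ne'
  have := ((hml.sub (hasDerivAt_id t)).add_const (1:ℝ)).sub hq
  refine this.congr_deriv ?_
  field_simp
  ring

/-- g1 is monotone on (0, ∞) -/
private lemma g1_mono : MonotoneOn (fun s => log s - 3*(s-1)*(s+5)/(2*(s+2)^2)) (Set.Ioi 0) := by
  have hint : interior (Set.Ioi (0:ℝ)) = Set.Ioi 0 := interior_Ioi
  apply monotoneOn_of_deriv_nonneg (convex_Ioi 0)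
  · intro s hs
    exact ((hasDerivAt_g1 hs).continuousAt).continuousWithinAt
  · rw [hint]; intro s hs
    exact (hasDerivAt_g1 hs).differentiableAt.differentiableWithinAt
  · rw [hint]; intro s hs
    have hs' : (0:ℝ) < s := hs
    rw [(hasDerivAt_g1 hs').deriv]
    rw [sub_nonneg, div_le_div_iff₀ (by positivity) hs']
    nlinarith [sq_nonneg (s-1), hs'.le, sq_nonneg s]

private lemma key_ineq {t : ℝ} (ht : 0 ≤ t) :
    3*(t-1)^2/(2*(t+2)) ≤ t * log t - t + 1 := by
  rcases eq_or_lt_of_le ht with h0 | ht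
  · rw [← h0]; norm_num
  set g : ℝ → ℝ := fun s => s * log s - s + 1 - 3*(s-1)^2/(2*(s+2)) with hg
  have hg1 : g 1 = 0 := by simp [hg]
  have hgoal : 0 ≤ g t := by
    rcases le_or_gt 1 t with h1 | h1
    · have hmono : MonotoneOn g (Set.Ici 1) := by
        apply monotoneOn_of_deriv_nonneg (convex_Ici 1)
        · intro s hs; exact (hasDerivAt_g (by linarith [Set.mem_Ici.mp hs])).continuousAt.continuousWithinAt
        · rw [interior_Ici]; intro s hs
          exact (hasDerivAt_g (by linarith [Set.mem_Ioi.mp hs])).differentiableAt.differentiableWithinAt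
        · rw [interior_Ici]; intro s hs
          have hs1 : (1:ℝ) < s := hs
          rw [(hasDerivAt_g (by linarith)).deriv]
          have := g1_mono (Set.mem_Ioi.mpr one_pos) (Set.mem_Ioi.mpr (by linarith : (0:ℝ) < s)) hs1.le
          simpa using this
      have := hmono (Set.mem_Ici.mpr le_rfl) (Set.mem_Ici.mpr h1) h1
      rw [hg1] at this; exact this
    · have hanti : AntitoneOn g (Set.Ioc 0 1) := by
        apply antitoneOn_of_deriv_nonpos (convex_Ioc 0 1)
        · intro s hs; exact (hasDerivAt_g hs.1).continuousAt.continuousWithinAt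
        · rw [interior_Ioc]; intro s hs
          exact (hasDerivAt_g hs.1).differentiableAt.differentiableWithinAt
        · rw [interior_Ioc]; intro s hs
          rw [(hasDerivAt_g hs.1).deriv]
          have := g1_mono (Set.mem_Ioi.mpr hs.1) (Set.mem_Ioi.mpr one_pos) hs.2.le
          simpa using this
      have := hanti (Set.mem_Ioc.mpr ⟨ht, h1.le⟩) (Set.mem_Ioc.mpr ⟨one_pos, le_rfl⟩) h1.le
      rw [hg1] at this; exact this
  simp only [hg] at hgoal
  linarith


private lemma scalar_ineq {a m : ℝ} (ha : 0 ≤ a) (hm : 0 < m) :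
    3*(a-m)^2/(2*(a+2*m)) ≤ a * log a - a * log m - a + m := by
  rcases eq_or_lt_of_le ha with h0 | ha
  · rw [← h0]
    rw [div_le_iff₀ (by positivity)]
    simp
    nlinarith [hm]
  · have hkey := key_ineq (le_of_lt (div_pos ha hm))
    have hm' : m ≠ 0 := hm.ne'
    have hd : a + 2*m ≠ 0 := by positivity
    have hlog : log (a/m) = log a - log m := log_div ha.ne' hm'
    have h2 := mul_le_mul_of_nonneg_left hkey hm.le
    calc 3*(a-m)^2/(2*(a+2*m)) = m * (3*((a/m)-1)^2/(2*((a/m)+2))) := by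
          rw [eq_comm]; field_simp
      _ ≤ m * ((a/m) * log (a/m) - (a/m) + 1) := h2
      _ = a * log a - a * log m - a + m := by rw [hlog]; field_simp

private lemma pinsker {d : ℕ} (p m : Fin d → ℝ) (hp : ∀ i, 0 ≤ p i) (hm : ∀ i, 0 ≤ m i)
    (hps : ∑ i, p i = 1) (hms : ∑ i, m i = 1) (hzero : ∀ i, m i = 0 → p i = 0) :
    (∑ i, |p i - m i|)^2 / 2 ≤ ∑ i, (p i * log (p i) - p i * log (m i)) := by
  have hterm : ∀ i, (p i - m i) + 3*(p i - m i)^2/(2*(p i + 2*m i))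
      ≤ p i * log (p i) - p i * log (m i) := by
    intro i
    rcases eq_or_lt_of_le (hm i) with h0 | h0
    · have hp0 := hzero i h0.symm
      rw [hp0, ← h0]; simp
    · have := scalar_ineq (hp i) h0
      linarith
  have hsum : ∑ i, ((p i - m i) + 3*(p i - m i)^2/(2*(p i + 2*m i)))
      ≤ ∑ i, (p i * log (p i) - p i * log (m i)) :=
    Finset.sum_le_sum (fun i _ => hterm i)
  rw [Finset.sum_add_distrib, Finset.sum_sub_distrib, hps, hms, sub_self, zero_add] at hsum
  -- Cauchy–Schwarz
  have hcs := Finset.sum_mul_sq_le_sq_mul_sq Finset.univ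
    (fun i => |p i - m i| / Real.sqrt (p i + 2*m i))
    (fun i => Real.sqrt (p i + 2*m i))
  have hc : ∀ i, (0:ℝ) ≤ p i + 2*m i := fun i => by have := hp i; have := hm i; linarith
  have hfg : ∀ i, |p i - m i| / Real.sqrt (p i + 2*m i) * Real.sqrt (p i + 2*m i)
      = |p i - m i| := by
    intro i
    rcases eq_or_lt_of_le (hc i) with h0 | h0
    · have hpi : p i = 0 := by have := hp i; have := hm i; linarith
      have hmi : m i = 0 := by have := hp i; have := hm i; linarith
      rw [hpi, hmi]; simp
    · rw [div_mul_cancel₀]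
      exact (Real.sqrt_ne_zero'.mpr h0)
  have hf2 : ∀ i, (|p i - m i| / Real.sqrt (p i + 2*m i))^2
      = (p i - m i)^2 / (p i + 2*m i) := by
    intro i
    rw [div_pow, sq_abs, Real.sq_sqrt (hc i)]
  have hg2 : ∑ i, (Real.sqrt (p i + 2*m i))^2 = 3 := by
    have : ∀ i ∈ Finset.univ, (Real.sqrt (p i + 2*m i))^2 = p i + 2*m i :=
      fun i _ => Real.sq_sqrt (hc i)
    rw [Finset.sum_congr rfl this, Finset.sum_add_distrib, hps, ← Finset.mul_sum, hms]
    norm_num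
  simp only [hfg, hf2] at hcs
  rw [hg2] at hcs
  -- relate ∑ 3(p-m)²/(2(p+2m)) to ∑ (p-m)²/(p+2m)
  have hhalf : ∀ i, 3*(p i - m i)^2/(2*(p i + 2*m i))
      = (3/2) * ((p i - m i)^2 / (p i + 2*m i)) := by
    intro i
    rw [div_mul_div_comm]
  simp only [hhalf] at hsum
  rw [← Finset.mul_sum] at hsum
  linarith

/-- The negative-entropy function `V(x) = λ ∑ᵢ xᵢ log xᵢ` is `λ`-strongly convex
w.r.t. the `ℓ₁` norm on the probability simplex. -/
theorem entropy_strongly_convex_on_simplex {d : ℕ} (lam : ℝ) (hlam : 0 < lam) :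
    ∀ x x' : Fin d → ℝ,
      ((∀ i, 0 ≤ x i) ∧ ∑ i, x i = 1) →
      ((∀ i, 0 ≤ x' i) ∧ ∑ i, x' i = 1) →
      ∀ α : ℝ, 0 ≤ α → α ≤ 1 →
        lam * ∑ i, (α * x i + (1 - α) * x' i) * Real.log (α * x i + (1 - α) * x' i)
          ≤ α * (lam * ∑ i, x i * Real.log (x i))
            + (1 - α) * (lam * ∑ i, x' i * Real.log (x' i))
            - lam * α * (1 - α) / 2 * (∑ i, |x i - x' i|) ^ 2 := by
  rintro x x' ⟨hx, hxs⟩ ⟨hx', hxs'⟩ α hα0 hα1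
  rcases eq_or_lt_of_le hα0 with h0 | h0
  · rw [← h0]; simp
  rcases eq_or_lt_of_le hα1 with h1 | h1
  · rw [h1]; simp
  set m : Fin d → ℝ := fun i => α * x i + (1 - α) * x' i with hmdef
  have h1' : 0 < 1 - α := by linarith
  have hm0 : ∀ i, 0 ≤ m i := fun i =>
    add_nonneg (mul_nonneg h0.le (hx i)) (mul_nonneg h1'.le (hx' i))
  have hms : ∑ i, m i = 1 := by
    simp only [hmdef, Finset.sum_add_distrib, ← Finset.mul_sum, hxs, hxs']
    ring
  have hzx : ∀ i, m i = 0 → x i = 0 := by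
    intro i hmi
    have h1 := mul_nonneg h0.le (hx i)
    have h2 := mul_nonneg h1'.le (hx' i)
    have : α * x i = 0 := by simp only [hmdef] at hmi; linarith
    have := mul_eq_zero.mp this
    rcases this with h | h
    · exact absurd h h0.ne'
    · exact h
  have hzx' : ∀ i, m i = 0 → x' i = 0 := by
    intro i hmi
    have h1 := mul_nonneg h0.le (hx i)
    have h2 := mul_nonneg h1'.le (hx' i)
    have : (1-α) * x' i = 0 := by simp only [hmdef] at hmi; linarith
    rcases mul_eq_zero.mp this with h | h
    · exact absurd h h1'.ne'
    · exact h
  have hKx := pinsker x m hx hm0 hxs hms hzx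
  have hKx' := pinsker x' m hx' hm0 hxs' hms hzx'
  set T : ℝ := ∑ i, |x i - x' i| with hT
  have hTnn : 0 ≤ T := Finset.sum_nonneg fun i _ => abs_nonneg _
  have habs1 : ∑ i, |x i - m i| = (1-α) * T := by
    rw [hT, Finset.mul_sum]
    apply Finset.sum_congr rfl
    intro i _
    rw [← abs_of_nonneg h1'.le, ← abs_mul]
    congr 1
    simp only [hmdef]; ring
  have habs2 : ∑ i, |x' i - m i| = α * T := by
    rw [hT, Finset.mul_sum]
    apply Finset.sum_congr rfl
    intro i _
    rw [← abs_of_nonneg h0.le, ← abs_mul]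
    have : x' i - m i = -(α * (x i - x' i)) := by simp only [hmdef]; ring
    rw [this, abs_neg]
  rw [habs1] at hKx
  rw [habs2] at hKx'
  -- decomposition of the convexity gap
  have hdec : α * (∑ i, x i * log (x i)) + (1-α) * (∑ i, x' i * log (x' i))
      - (∑ i, m i * log (m i))
      = α * (∑ i, (x i * log (x i) - x i * log (m i)))
        + (1-α) * (∑ i, (x' i * log (x' i) - x' i * log (m i))) := by
    simp only [Finset.mul_sum, ← Finset.sum_sub_distrib, ← Finset.sum_add_distrib]
    apply Finset.sum_congr rfl
    intro i _
    simp only [hmdef]; ring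
  -- combine
  have hKx2 := mul_le_mul_of_nonneg_left hKx h0.le
  have hKx'2 := mul_le_mul_of_nonneg_left hKx' h1'.le
  have hgap : α * (1-α) / 2 * T^2
      ≤ α * (∑ i, (x i * log (x i) - x i * log (m i)))
        + (1-α) * (∑ i, (x' i * log (x' i) - x' i * log (m i))) := by
    nlinarith [hKx2, hKx'2, sq_nonneg T, mul_pos h0 h1']
  have hfinal : lam * (α * (1-α) / 2 * T^2)
      ≤ lam * (α * (∑ i, x i * log (x i)) + (1-α) * (∑ i, x' i * log (x' i))
          - (∑ i, m i * log (m i))) := by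
    rw [hdec]
    exact mul_le_mul_of_nonneg_left hgap hlam.le
  have : lam * ∑ i, m i * log (m i)
      ≤ α * (lam * ∑ i, x i * log (x i)) + (1 - α) * (lam * ∑ i, x' i * log (x' i))
        - lam * α * (1 - α) / 2 * T ^ 2 := by nlinarith [hfinal]
  exact this
end
end
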